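/- Epsilon-removal correctness for a single symbol block: for nonnegative matrices E and M with the Neumann series E* = ∑_{k=0}^∞ E^k convergent, and a string s = σ₁…σ_N over Σ, the sum over all (k₁,…,k_N) ∈ ℕ^N of E^{k₁} M_{σ₁} E^{k₂} M_{σ₂} ⋯ E^{k_N} M_{σ_N} (converging entrywise) equals ∏_{n=1}^N (E* M_{σ_n}). -/

import Mathlib

set_option maxHeartbeats 1000000

private lemma mul_entries_nonneg {K : ℕ} {A B : Matrix (Fin K) (Fin K) ℝ}
    (hA : ∀ i j, 0 ≤ A i j) (hB : ∀ i j, 0 ≤ B i j) :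
    ∀ i j, 0 ≤ (A * B) i j := by
  intro i j
  rw [Matrix.mul_apply]
  exact Finset.sum_nonneg fun c _ => mul_nonneg (hA i c) (hB c j)

private lemma pow_entries_nonneg {K : ℕ} {E : Matrix (Fin K) (Fin K) ℝ}
    (hE : ∀ i j, 0 ≤ E i j) (k : ℕ) : ∀ i j, 0 ≤ (E ^ k) i j := by
  induction k with
  | zero =>
    intro i j
    simp only [pow_zero, Matrix.one_apply]
    split <;> norm_num
  | succ n ih =>
    rw [pow_succ]
    exact mul_entries_nonneg ih hE

private lemma list_prod_entries_nonneg {K : ℕ} :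
    ∀ (N : ℕ) (f : Fin N → Matrix (Fin K) (Fin K) ℝ),
      (∀ n i j, 0 ≤ f n i j) → ∀ i j, 0 ≤ (List.ofFn f).prod i j := by
  intro N
  induction N with
  | zero =>
    intro f _ i j
    simp only [List.ofFn_zero, List.prod_nil, Matrix.one_apply]
    split <;> norm_num
  | succ n ih =>
    intro f hf i j
    rw [List.ofFn_succ, List.prod_cons]
    exact mul_entries_nonneg (hf 0) (ih _ fun n i j => hf _ i j) i j

private lemma summable_matrix_mul_of_nonneg {K : ℕ} {ι κ : Type*}
    {f : ι → Matrix (Fin K) (Fin K) ℝ} {g : κ → Matrix (Fin K) (Fin K) ℝ}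
    (hf : Summable f) (hg : Summable g)
    (hf0 : ∀ i a b, 0 ≤ f i a b) (hg0 : ∀ j a b, 0 ≤ g j a b) :
    Summable fun p : ι × κ => f p.1 * g p.2 := by
  have hf' : ∀ a b, Summable fun i => f i a b := fun a b =>
    Pi.summable.1 (Pi.summable.1 hf a) b
  have hg' : ∀ a b, Summable fun j => g j a b := fun a b =>
    Pi.summable.1 (Pi.summable.1 hg a) b
  refine Pi.summable.2 ?_
  intro a
  rw [Pi.summable]
  intro b
  have : (fun p : ι × κ => (f p.1 * g p.2) a b)
      = fun p : ι × κ => ∑ c, f p.1 a c * g p.2 c b := by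
    funext p; rw [Matrix.mul_apply]
  rw [this]
  exact summable_sum fun c _ =>
    (hf' a c).mul_of_nonneg (hg' c b) (fun i => hf0 i a c) (fun j => hg0 j c b)

/-- Epsilon-removal, core computation: the sum over all tuples `(k₁, …, k_N)`
of `E^{k₁} M_{σ₁} ⋯ E^{k_N} M_{σ_N}` equals `∏ₙ (E* M_{σₙ})`, where
`E* = ∑ₖ E^k`. -/
theorem stmt_11 {K : ℕ} {A : Type*} (N : ℕ)
    (E : Matrix (Fin K) (Fin K) ℝ) (M : A → Matrix (Fin K) (Fin K) ℝ)
    (hE : ∀ i j, 0 ≤ E i j) (hM : ∀ a i j, 0 ≤ M a i j)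
    (Estar : Matrix (Fin K) (Fin K) ℝ)
    (hstar : HasSum (fun k : ℕ => E ^ k) Estar)
    (s : Fin N → A) :
    HasSum (fun ks : Fin N → ℕ => (List.ofFn fun n => E ^ ks n * M (s n)).prod)
      ((List.ofFn fun n => Estar * M (s n)).prod) := by
  induction N with
  | zero =>
    have h := hasSum_single (f := fun ks : Fin 0 → ℕ =>
        (List.ofFn fun n => E ^ ks n * M (s n)).prod) (fun _ : Fin 0 => 0)
        (fun b hb => absurd (Subsingleton.elim b _) hb)
    simpa using h
  | succ n ih =>
    -- head factor
    have h1 : HasSum (fun k : ℕ => E ^ k * M (s 0)) (Estar * M (s 0)) :=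
      hstar.mul_right _
    -- tail by induction hypothesis
    have h2 := ih (fun i => s i.succ)
    -- summability of the product family
    have hsum : Summable fun p : ℕ × (Fin n → ℕ) =>
        (E ^ p.1 * M (s 0)) *
          (List.ofFn fun m : Fin n => E ^ p.2 m * M (s m.succ)).prod := by
      refine summable_matrix_mul_of_nonneg (f := fun k : ℕ => E ^ k * M (s 0))
        (g := fun ks : Fin n → ℕ => (List.ofFn fun m : Fin n => E ^ ks m * M (s m.succ)).prod)
        h1.summable h2.summable ?_ ?_
      · exact fun k => mul_entries_nonneg (pow_entries_nonneg hE k) (hM _)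
      · exact fun ks => list_prod_entries_nonneg n _
          (fun m i j => mul_entries_nonneg (pow_entries_nonneg hE (ks m)) (hM _) i j)
    have hmul := h1.mul h2 hsum
    -- transport along the equivalence (Fin (n+1) → ℕ) ≃ ℕ × (Fin n → ℕ)
    refine (((Fin.consEquiv fun _ => ℕ).symm).symm.hasSum_iff).1 ?_
    have hfun : ((fun ks : Fin (n + 1) → ℕ =>
          (List.ofFn fun m => E ^ ks m * M (s m)).prod) ∘ ((Fin.consEquiv fun _ => ℕ).symm).symm)
        = fun p : ℕ × (Fin n → ℕ) =>
          (E ^ p.1 * M (s 0)) *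
            (List.ofFn fun m : Fin n => E ^ p.2 m * M (s m.succ)).prod := by
      funext p
      simp only [Function.comp_apply, Equiv.symm_symm, Fin.consEquiv_apply]
      rw [List.ofFn_succ, List.prod_cons]
      simp [Fin.cons_zero, Fin.cons_succ]
    rw [hfun, List.ofFn_succ, List.prod_cons]
    exact hmul
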